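/- arXiv:1506.04785 — 2 statements merged into one kernel-verified Lean document; each statement's English description precedes it below -/
import Mathlib

section
/- If x and y are two generators of an n×n grid (i.e., sets of n points, one on each horizontal and one on each vertical grid circle of the torus) and r is an empty rectangle connecting x to y, then the Maslov gradings satisfy M(x) − M(y) = 1 − 2·n_O(r), where n_O(r) is the number of O-markings contained in r. -/
/-!
STATEMENT 1: For generators x, y of an n×n grid connected by an empty rectangle r,
the Maslov gradings satisfy M(x) − M(y) = 1 − 2 n_O(r).

Generators are modelled by permutations σ : Fin n ≃ Fin n (the generator has one point
(i, σ i) on each vertical and horizontal grid circle); the O-markings are placed at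
half-integer coordinates (i + 1/2, ρ i + 1/2), one in each row and column.  The Maslov
grading is M(x) = J(x − O, x − O) + 1, expanded bilinearly.  A (planar) rectangle
connecting x to y has its lower-left and upper-right corners on x, its other two corners
on y, and x, y agree elsewhere; it is empty if its interior contains no point of x.
-/

noncomputable section
open Finset

attribute [local instance] Classical.propDecidable

def Ic (A B : Finset (ℝ × ℝ)) : ℕ :=
  ((A ×ˢ B).filter fun p => p.1.1 < p.2.1 ∧ p.1.2 < p.2.2).card

def Jc (A B : Finset (ℝ × ℝ)) : ℚ := ((Ic A B : ℚ) + (Ic B A : ℚ)) / 2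

/-- The points of the generator associated to a permutation `σ`. -/
def genPts {n : ℕ} (σ : Equiv.Perm (Fin n)) : Finset (ℝ × ℝ) :=
  Finset.univ.image fun i : Fin n => ((i.val : ℝ), ((σ i).val : ℝ))

/-- The O-markings, at half-integer coordinates, one per row and per column. -/
def oPts {n : ℕ} (ρ : Equiv.Perm (Fin n)) : Finset (ℝ × ℝ) :=
  Finset.univ.image fun i : Fin n => ((i.val : ℝ) + 1/2, ((ρ i).val : ℝ) + 1/2)

/-- The Maslov grading `M(x) = J(x − O, x − O) + 1`, expanded bilinearly. -/
def Maslov {n : ℕ} (σ ρ : Equiv.Perm (Fin n)) : ℚ :=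
  Jc (genPts σ) (genPts σ) - 2 * Jc (genPts σ) (oPts ρ) + Jc (oPts ρ) (oPts ρ) + 1

lemma key (P Q R S : Prop) [Decidable P] [Decidable Q] [Decidable R] [Decidable S]
    (hQP : Q → P) (hSR : S → R) :
    ((if P ∧ R then (1:ℤ) else 0) - (if P ∧ S then 1 else 0)) +
      ((if Q ∧ S then (1:ℤ) else 0) - (if Q ∧ R then 1 else 0)) =
    (if P ∧ ¬Q ∧ R ∧ ¬S then 1 else 0) := by
  by_cases hP : P <;> by_cases hQ : Q <;> by_cases hR : R <;> by_cases hS : S <;> simp_all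

lemma Ic_eq_sum' {n : ℕ} (f g : Fin n → ℝ × ℝ) (hf : Function.Injective f)
    (hg : Function.Injective g) :
    ((Ic (Finset.univ.image f) (Finset.univ.image g)) : ℤ) =
      ∑ i : Fin n, ∑ j : Fin n,
        if (f i).1 < (g j).1 ∧ (f i).2 < (g j).2 then 1 else 0 := by
  rw [Ic, Finset.card_filter, Finset.sum_product,
    Finset.sum_image (fun x _ y _ h => hf h)]
  push_cast
  exact Finset.sum_congr rfl fun i _ => Finset.sum_image (fun x _ y _ h => hg h)

lemma cast_lt_half {a b : ℕ} : (a:ℝ) < b + 1/2 ↔ a ≤ b := by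
  constructor
  · intro h
    have : (a:ℝ) < (b:ℝ) + 1 := by linarith
    have : a < b + 1 := by exact_mod_cast this
    omega
  · intro h
    have : (a:ℝ) ≤ b := by exact_mod_cast h
    linarith

lemma half_lt_cast {a b : ℕ} : (a:ℝ) + 1/2 < b ↔ a < b := by
  constructor
  · intro h
    have : (a:ℝ) < (b:ℝ) := by linarith
    exact_mod_cast this
  · intro h
    have : (a:ℝ) + 1 ≤ (b:ℝ) := by exact_mod_cast Nat.succ_le_of_lt h
    linarith

lemma gen_inj {n : ℕ} (σ : Equiv.Perm (Fin n)) :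
    Function.Injective (fun i : Fin n => ((i.val : ℝ), ((σ i).val : ℝ))) := by
  intro a b h
  have := congrArg Prod.fst h
  simp only at this
  exact Fin.val_injective (by exact_mod_cast this)

lemma o_inj {n : ℕ} (ρ : Equiv.Perm (Fin n)) :
    Function.Injective (fun i : Fin n => ((i.val : ℝ) + 1/2, ((ρ i).val : ℝ) + 1/2)) := by
  intro a b h
  have h1 := congrArg Prod.fst h
  simp only at h1
  have : (a.val : ℝ) = b.val := by linarith
  exact Fin.val_injective (by exact_mod_cast this)

lemma IcXX {n : ℕ} (σ σ' : Equiv.Perm (Fin n)) :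
    ((Ic (genPts σ) (genPts σ')) : ℤ) =
      ∑ i : Fin n, ∑ j : Fin n, if i < j ∧ σ i < σ' j then 1 else 0 := by
  rw [genPts, genPts, Ic_eq_sum' _ _ (gen_inj σ) (gen_inj σ')]
  refine Finset.sum_congr rfl fun i _ => Finset.sum_congr rfl fun j _ => ?_
  refine if_congr ?_ rfl rfl
  exact and_congr Nat.cast_lt Nat.cast_lt

lemma IcXO {n : ℕ} (σ ρ : Equiv.Perm (Fin n)) :
    ((Ic (genPts σ) (oPts ρ)) : ℤ) =
      ∑ i : Fin n, ∑ j : Fin n, if i ≤ j ∧ σ i ≤ ρ j then 1 else 0 := by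
  rw [genPts, oPts, Ic_eq_sum' _ _ (gen_inj σ) (o_inj ρ)]
  refine Finset.sum_congr rfl fun i _ => Finset.sum_congr rfl fun j _ => ?_
  refine if_congr ?_ rfl rfl
  exact and_congr cast_lt_half cast_lt_half

lemma IcOX {n : ℕ} (ρ σ : Equiv.Perm (Fin n)) :
    ((Ic (oPts ρ) (genPts σ)) : ℤ) =
      ∑ j : Fin n, ∑ i : Fin n, if j < i ∧ ρ j < σ i then 1 else 0 := by
  rw [genPts, oPts, Ic_eq_sum' _ _ (o_inj ρ) (gen_inj σ)]
  refine Finset.sum_congr rfl fun i _ => Finset.sum_congr rfl fun j _ => ?_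
  refine if_congr ?_ rfl rfl
  exact and_congr half_lt_cast half_lt_cast

lemma lemB {n : ℕ} (σ τ ρ : Equiv.Perm (Fin n)) (c₁ c₂ : Fin n)
    (hc : c₁ < c₂) (hr : σ c₁ < σ c₂)
    (hτ1 : τ c₁ = σ c₂) (hτ2 : τ c₂ = σ c₁)
    (hτ3 : ∀ i, i ≠ c₁ → i ≠ c₂ → τ i = σ i) :
    (∑ i : Fin n, ∑ j : Fin n, if i ≤ j ∧ σ i ≤ ρ j then (1:ℤ) else 0) -
      (∑ i : Fin n, ∑ j : Fin n, if i ≤ j ∧ τ i ≤ ρ j then (1:ℤ) else 0) =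
    ((Finset.univ.filter fun i : Fin n =>
        c₁ ≤ i ∧ i < c₂ ∧ σ c₁ ≤ ρ i ∧ ρ i < σ c₂).card : ℤ) := by
  rw [Finset.sum_comm (f := fun i j : Fin n => if i ≤ j ∧ σ i ≤ ρ j then (1:ℤ) else 0),
    Finset.sum_comm (f := fun i j : Fin n => if i ≤ j ∧ τ i ≤ ρ j then (1:ℤ) else 0),
    ← Finset.sum_sub_distrib, Finset.card_filter]
  push_cast
  refine Finset.sum_congr rfl fun j _ => ?_
  rw [← Finset.sum_sub_distrib]
  have hv : ∀ i : Fin n, i ∈ Finset.univ → i ∉ ({c₁, c₂} : Finset (Fin n)) →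
      ((if i ≤ j ∧ σ i ≤ ρ j then (1:ℤ) else 0) -
        (if i ≤ j ∧ τ i ≤ ρ j then (1:ℤ) else 0)) = 0 := by
    intro i _ hi
    simp only [Finset.mem_insert, Finset.mem_singleton, not_or] at hi
    rw [hτ3 i hi.1 hi.2, sub_self]
  rw [← Finset.sum_subset (Finset.subset_univ ({c₁, c₂} : Finset (Fin n))) hv,
    Finset.sum_pair hc.ne, hτ1, hτ2]
  rw [key (c₁ ≤ j) (c₂ ≤ j) (σ c₁ ≤ ρ j) (σ c₂ ≤ ρ j)
    (fun h => le_trans hc.le h) (fun h => le_trans hr.le h)]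
  simp only [not_le]

lemma lemC {n : ℕ} (σ τ ρ : Equiv.Perm (Fin n)) (c₁ c₂ : Fin n)
    (hc : c₁ < c₂) (hr : σ c₁ < σ c₂)
    (hτ1 : τ c₁ = σ c₂) (hτ2 : τ c₂ = σ c₁)
    (hτ3 : ∀ i, i ≠ c₁ → i ≠ c₂ → τ i = σ i) :
    (∑ j : Fin n, ∑ i : Fin n, if j < i ∧ ρ j < σ i then (1:ℤ) else 0) -
      (∑ j : Fin n, ∑ i : Fin n, if j < i ∧ ρ j < τ i then (1:ℤ) else 0) =
    ((Finset.univ.filter fun i : Fin n =>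
        c₁ ≤ i ∧ i < c₂ ∧ σ c₁ ≤ ρ i ∧ ρ i < σ c₂).card : ℤ) := by
  rw [← Finset.sum_sub_distrib, Finset.card_filter]
  push_cast
  refine Finset.sum_congr rfl fun j _ => ?_
  rw [← Finset.sum_sub_distrib]
  have hv : ∀ i : Fin n, i ∈ Finset.univ → i ∉ ({c₁, c₂} : Finset (Fin n)) →
      ((if j < i ∧ ρ j < σ i then (1:ℤ) else 0) -
        (if j < i ∧ ρ j < τ i then (1:ℤ) else 0)) = 0 := by
    intro i _ hi
    simp only [Finset.mem_insert, Finset.mem_singleton, not_or] at hi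
    rw [hτ3 i hi.1 hi.2, sub_self]
  rw [← Finset.sum_subset (Finset.subset_univ ({c₁, c₂} : Finset (Fin n))) hv,
    Finset.sum_pair hc.ne, hτ1, hτ2, add_comm]
  rw [key (j < c₂) (j < c₁) (ρ j < σ c₂) (ρ j < σ c₁)
    (fun h => lt_trans h hc) (fun h => lt_trans h hr)]
  refine if_congr ?_ rfl rfl
  simp only [not_lt]
  tauto

lemma lemA {n : ℕ} (σ τ : Equiv.Perm (Fin n)) (c₁ c₂ : Fin n)
    (hc : c₁ < c₂) (hr : σ c₁ < σ c₂)
    (hτ1 : τ c₁ = σ c₂) (hτ2 : τ c₂ = σ c₁)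
    (hτ3 : ∀ i, i ≠ c₁ → i ≠ c₂ → τ i = σ i)
    (hempty : ∀ i : Fin n, c₁ < i → i < c₂ → ¬ (σ c₁ < σ i ∧ σ i < σ c₂)) :
    (∑ i : Fin n, ∑ j : Fin n, if i < j ∧ σ i < σ j then (1:ℤ) else 0) -
      (∑ i : Fin n, ∑ j : Fin n, if i < j ∧ τ i < τ j then (1:ℤ) else 0) = 1 := by
  rw [← Finset.sum_sub_distrib]
  have hv : ∀ i : Fin n, i ∈ Finset.univ → i ∉ ({c₁, c₂} : Finset (Fin n)) →
      ((∑ j : Fin n, if i < j ∧ σ i < σ j then (1:ℤ) else 0) -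
        (∑ j : Fin n, if i < j ∧ τ i < τ j then (1:ℤ) else 0)) = 0 := by
    intro i _ hi
    simp only [Finset.mem_insert, Finset.mem_singleton, not_or] at hi
    rw [← Finset.sum_sub_distrib]
    have hv2 : ∀ j : Fin n, j ∈ Finset.univ → j ∉ ({c₁, c₂} : Finset (Fin n)) →
        ((if i < j ∧ σ i < σ j then (1:ℤ) else 0) -
          (if i < j ∧ τ i < τ j then (1:ℤ) else 0)) = 0 := by
      intro j _ hj
      simp only [Finset.mem_insert, Finset.mem_singleton, not_or] at hj
      rw [hτ3 i hi.1 hi.2, hτ3 j hj.1 hj.2, sub_self]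
    rw [← Finset.sum_subset (Finset.subset_univ ({c₁, c₂} : Finset (Fin n))) hv2,
      Finset.sum_pair hc.ne, hτ3 i hi.1 hi.2, hτ1, hτ2, add_comm]
    rw [key (i < c₂) (i < c₁) (σ i < σ c₂) (σ i < σ c₁)
      (fun h => lt_trans h hc) (fun h => lt_trans h hr)]
    rw [if_neg]
    rintro ⟨h1, h2, h3, h4⟩
    exact hempty i (lt_of_le_of_ne (not_lt.1 h2) (Ne.symm hi.1))
      h1 ⟨lt_of_le_of_ne (not_lt.1 h4) (fun he => hi.1 (σ.injective he.symm)), h3⟩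
  rw [← Finset.sum_subset (Finset.subset_univ ({c₁, c₂} : Finset (Fin n))) hv,
    Finset.sum_pair hc.ne]
  have hre : (∑ j : Fin n, if c₁ < j ∧ σ c₁ < σ j then (1:ℤ) else 0) -
        (∑ j : Fin n, if c₁ < j ∧ τ c₁ < τ j then (1:ℤ) else 0) +
      ((∑ j : Fin n, if c₂ < j ∧ σ c₂ < σ j then (1:ℤ) else 0) -
        (∑ j : Fin n, if c₂ < j ∧ τ c₂ < τ j then (1:ℤ) else 0)) =
      ∑ j : Fin n, (((if c₁ < j ∧ σ c₁ < σ j then (1:ℤ) else 0) -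
          (if c₁ < j ∧ τ c₁ < τ j then (1:ℤ) else 0)) +
        ((if c₂ < j ∧ σ c₂ < σ j then (1:ℤ) else 0) -
          (if c₂ < j ∧ τ c₂ < τ j then (1:ℤ) else 0))) := by
    rw [Finset.sum_add_distrib, Finset.sum_sub_distrib, Finset.sum_sub_distrib]
  rw [hre]
  have hpt : ∀ j : Fin n, (((if c₁ < j ∧ σ c₁ < σ j then (1:ℤ) else 0) -
          (if c₁ < j ∧ τ c₁ < τ j then (1:ℤ) else 0)) +
        ((if c₂ < j ∧ σ c₂ < σ j then (1:ℤ) else 0) -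
          (if c₂ < j ∧ τ c₂ < τ j then (1:ℤ) else 0))) =
      if j = c₂ then 1 else 0 := by
    intro j
    by_cases hj2 : j = c₂
    · subst hj2
      rw [hτ1, hτ2]
      rw [if_pos ⟨hc, hr⟩, if_neg (fun h => hr.asymm h.2),
        if_neg (fun h => lt_irrefl _ h.1), if_neg (fun h => lt_irrefl _ h.1),
        if_pos rfl]
      ring
    · by_cases hj1 : j = c₁
      · subst hj1
        rw [if_neg (fun h => lt_irrefl _ h.1), if_neg (fun h => lt_irrefl _ h.1),
          if_neg (fun h => (lt_trans hc h.1).false),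
          if_neg (fun h => (lt_trans hc h.1).false), if_neg hj2]
        ring
      · rw [hτ1, hτ2, hτ3 j hj1 hj2]
        rw [key (c₁ < j) (c₂ < j) (σ c₁ < σ j) (σ c₂ < σ j)
          (fun h => lt_trans hc h) (fun h => lt_trans hr h)]
        rw [if_neg, if_neg hj2]
        rintro ⟨h1, h2, h3, h4⟩
        exact hempty j h1 (lt_of_le_of_ne (not_lt.1 h2) hj2)
          ⟨h3, lt_of_le_of_ne (not_lt.1 h4) (fun he => hj2 (σ.injective he))⟩
  rw [Finset.sum_congr rfl (fun j _ => hpt j)]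
  simp

theorem stmt1 {n : ℕ} (σ τ ρ : Equiv.Perm (Fin n)) (c₁ c₂ : Fin n)
    -- r is the rectangle with corners (c₁, σ c₁), (c₂, σ c₂) (on x) and
    -- (c₁, σ c₂), (c₂, σ c₁) (on y):
    (hc : c₁ < c₂) (hr : σ c₁ < σ c₂)
    (hτ : τ = σ * Equiv.swap c₁ c₂)
    -- r is empty: no point of x in its interior:
    (hempty : ∀ i : Fin n, c₁ < i → i < c₂ → ¬ (σ c₁ < σ i ∧ σ i < σ c₂)) :
    Maslov σ ρ - Maslov τ ρ =
      1 - 2 * ((Finset.univ.filter fun i : Fin n =>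
        c₁ ≤ i ∧ i < c₂ ∧ σ c₁ ≤ ρ i ∧ ρ i < σ c₂).card : ℚ) := by
  have hτ1 : τ c₁ = σ c₂ := by
    rw [hτ]; simp [Equiv.Perm.mul_apply]
  have hτ2 : τ c₂ = σ c₁ := by
    rw [hτ]; simp [Equiv.Perm.mul_apply]
  have hτ3 : ∀ i, i ≠ c₁ → i ≠ c₂ → τ i = σ i := by
    intro i h1 h2
    rw [hτ]; simp [Equiv.Perm.mul_apply, Equiv.swap_apply_of_ne_of_ne h1 h2]
  have hA : (Ic (genPts σ) (genPts σ) : ℚ) - (Ic (genPts τ) (genPts τ) : ℚ) = 1 := by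
    have hz : (Ic (genPts σ) (genPts σ) : ℤ) - (Ic (genPts τ) (genPts τ) : ℤ) = 1 := by
      rw [IcXX, IcXX]; exact lemA σ τ c₁ c₂ hc hr hτ1 hτ2 hτ3 hempty
    exact_mod_cast hz
  have hB : (Ic (genPts σ) (oPts ρ) : ℚ) - (Ic (genPts τ) (oPts ρ) : ℚ) =
      ((Finset.univ.filter fun i : Fin n =>
        c₁ ≤ i ∧ i < c₂ ∧ σ c₁ ≤ ρ i ∧ ρ i < σ c₂).card : ℚ) := by
    have hz : (Ic (genPts σ) (oPts ρ) : ℤ) - (Ic (genPts τ) (oPts ρ) : ℤ) =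
        ((Finset.univ.filter fun i : Fin n =>
          c₁ ≤ i ∧ i < c₂ ∧ σ c₁ ≤ ρ i ∧ ρ i < σ c₂).card : ℤ) := by
      rw [IcXO, IcXO]; exact lemB σ τ ρ c₁ c₂ hc hr hτ1 hτ2 hτ3
    exact_mod_cast hz
  have hC : (Ic (oPts ρ) (genPts σ) : ℚ) - (Ic (oPts ρ) (genPts τ) : ℚ) =
      ((Finset.univ.filter fun i : Fin n =>
        c₁ ≤ i ∧ i < c₂ ∧ σ c₁ ≤ ρ i ∧ ρ i < σ c₂).card : ℚ) := by
    have hz : (Ic (oPts ρ) (genPts σ) : ℤ) - (Ic (oPts ρ) (genPts τ) : ℤ) =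
        ((Finset.univ.filter fun i : Fin n =>
          c₁ ≤ i ∧ i < c₂ ∧ σ c₁ ≤ ρ i ∧ ρ i < σ c₂).card : ℤ) := by
      rw [IcOX, IcOX]; exact lemC σ τ ρ c₁ c₂ hc hr hτ1 hτ2 hτ3
    exact_mod_cast hz
  simp only [Maslov, Jc]
  linarith [hA, hB, hC]
end
end

section
/- Define F^Q on generators by fixing F^Q(x₀)=0 for a basepoint generator x₀ and setting F^Q(x) = Q(p_x) for any domain p_x from x to x₀ with O_n(p_x)=𝕆(p_x)=0. Then F^Q is well defined, and for any generators x, y and any domain p from x to y with O_n(p)=𝕆(p)=0, one has F^Q(x) − F^Q(y) = Q(p). -/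
/-!
STATEMENT 7: The function F^Q on generators, defined by F^Q(x₀) = 0 for a basepoint
generator x₀ and F^Q(x) = Q(p_x) for any domain p_x from x to x₀ with
O_n(p_x) = 𝕆(p_x) = 0, is well defined; and for any generators x, y and any domain p
from x to y with O_n(p) = 𝕆(p) = 0, one has F^Q(x) − F^Q(y) = Q(p).

Model as in the other grid statements.  Well-definedness is expressed by the existence
of a function F^Q with the defining properties.
-/

noncomputable section
open Finset

def IsGridDomain {n : ℕ} [NeZero n] (D : Fin n × Fin n → ℤ) (σ τ : Equiv.Perm (Fin n)) :
    Prop :=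
  ∀ i j : Fin n,
    D (i, j) - D (i - 1, j) - D (i, j - 1) + D (i - 1, j - 1) =
      (if σ i = j then 1 else 0) - (if τ i = j then 1 else 0)

def Ocnt {n : ℕ} (ρ : Equiv.Perm (Fin n)) (D : Fin n × Fin n → ℤ) : ℤ :=
  ∑ i : Fin n, D (i, ρ i)

def Qcnt {n : ℕ} (ρ : Equiv.Perm (Fin n)) (i₀ : Fin n) (D : Fin n × Fin n → ℤ) : ℤ :=
  ∑ s ∈ Finset.univ.filter (fun s : Fin n × Fin n => s.1 ≠ i₀ ∧ s.2 ≠ ρ i₀), D s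

/-! ### Auxiliary lemmas -/

open Fin.NatCast Fin.CommRing in
lemma const_of_step {n : ℕ} [NeZero n] (e : Fin n → ℤ) (h : ∀ i, e i = e (i - 1)) (i j : Fin n) :
    e i = e j := by
  have key : ∀ k : ℕ, e (j + (k : Fin n)) = e j := by
    intro k
    induction k with
    | zero => simp
    | succ k ih =>
      have h2 := h (j + ((k + 1 : ℕ) : Fin n))
      have h3 : (j + ((k + 1 : ℕ) : Fin n)) - 1 = j + (k : Fin n) := by
        push_cast; ring
      rw [h3] at h2
      rw [h2, ih]
  have h4 := key (i - j).val
  rwa [Fin.cast_val_eq_self, show j + (i - j) = i from by ring] at h4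

/-- The key vanishing lemma: a doubly periodic domain with zero Laplacian that
vanishes at `(i₀, ρ i₀)` and has zero total `Ocnt` has zero `Qcnt`. -/
lemma qzero {n : ℕ} [NeZero n] (ρ : Equiv.Perm (Fin n)) (i₀ : Fin n)
    (d : Fin n × Fin n → ℤ)
    (hd : ∀ i j : Fin n, d (i, j) - d (i - 1, j) - d (i, j - 1) + d (i - 1, j - 1) = 0)
    (h0 : d (i₀, ρ i₀) = 0) (hO : Ocnt ρ d = 0) :
    Qcnt ρ i₀ d = 0 := by
  set j₀ := ρ i₀ with hj₀
  have hc : ∀ i j j', d (i, j) - d (i - 1, j) = d (i, j') - d (i - 1, j') := by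
    intro i j j'
    exact const_of_step (fun j => d (i, j) - d (i - 1, j))
      (fun j => by have := hd i j; linarith) j j'
  have hrep : ∀ i j, d (i, j) = d (i, j₀) + d (i₀, j) - d (i₀, j₀) := by
    intro i j
    have h5 := const_of_step (fun i => d (i, j) - d (i, j₀))
      (fun i => by have := hc i j j₀; linarith) i i₀
    linarith
  have hS : (∑ i, d (i, j₀)) + (∑ j, d (i₀, j)) = 0 := by
    have h6 : ∑ i, d (i₀, ρ i) = ∑ j, d (i₀, j) := Equiv.sum_comp ρ (fun j => d (i₀, j))
    have h7 : Ocnt ρ d = ∑ i : Fin n, (d (i, j₀) + d (i₀, ρ i) - d (i₀, j₀)) := by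
      unfold Ocnt
      exact Finset.sum_congr rfl fun i _ => hrep i (ρ i)
    rw [Finset.sum_sub_distrib, Finset.sum_add_distrib, h6, Finset.sum_const] at h7
    rw [h0] at h7
    simp at h7
    linarith [hO, h7]
  have hA : (Finset.univ.filter (fun i : Fin n => i ≠ i₀)) = Finset.univ.erase i₀ :=
    Finset.filter_ne' _ _
  have hB : (Finset.univ.filter (fun j : Fin n => j ≠ j₀)) = Finset.univ.erase j₀ :=
    Finset.filter_ne' _ _
  have hq : Qcnt ρ i₀ d
      = ∑ i ∈ Finset.univ.erase i₀, ∑ j ∈ Finset.univ.erase j₀, (d (i, j₀) + d (i₀, j)) := by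
    unfold Qcnt
    rw [← hj₀]
    rw [show (Finset.univ : Finset (Fin n × Fin n)) = Finset.univ ×ˢ Finset.univ from
      (Finset.univ_product_univ).symm]
    rw [Finset.filter_product (p := fun i : Fin n => i ≠ i₀) (q := fun j : Fin n => j ≠ j₀),
      Finset.sum_product, hA, hB]
    refine Finset.sum_congr rfl fun i _ => Finset.sum_congr rfl fun j _ => ?_
    have := hrep i j
    rw [h0] at this
    linarith
  have hcard : (Finset.univ.erase j₀ : Finset (Fin n)).card = (Finset.univ.erase i₀).card := by
    simp [Finset.card_erase_of_mem]
  have hS1 : ∑ i ∈ Finset.univ.erase i₀, d (i, j₀) = ∑ i, d (i, j₀) := by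
    rw [Finset.sum_erase_eq_sub (Finset.mem_univ i₀), h0]; ring
  have hS2 : ∑ j ∈ Finset.univ.erase j₀, d (i₀, j) = ∑ j, d (i₀, j) := by
    rw [Finset.sum_erase_eq_sub (Finset.mem_univ j₀), h0]; ring
  rw [hq]
  have : ∀ i ∈ Finset.univ.erase i₀,
      ∑ j ∈ Finset.univ.erase j₀, (d (i, j₀) + d (i₀, j))
      = (Finset.univ.erase j₀).card • d (i, j₀) + ∑ j, d (i₀, j) := by
    intro i _
    rw [Finset.sum_add_distrib, Finset.sum_const, hS2]
  rw [Finset.sum_congr rfl this, Finset.sum_add_distrib, Finset.sum_const, ← Finset.smul_sum,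
    hS1, hcard]
  have : (∑ i, d (i, j₀)) = -(∑ j, d (i₀, j)) := by linarith
  rw [this]
  simp

/-! ### Construction of domains -/

lemma sub_one_val {n : ℕ} [NeZero n] (i : Fin n) :
    (i - 1).val = if i = 0 then n - 1 else i.val - 1 := by
  rcases n with _ | m
  · exact absurd rfl (NeZero.ne 0)
  · rw [Fin.coe_sub_one]; simp

lemma stepA {n : ℕ} [NeZero n] (f : Fin n → ℤ) (hf : ∑ x, f x = 0) (i : Fin n) :
    (∑ x ∈ Finset.univ.filter (fun x : Fin n => x.val ≤ i.val), f x)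
      - (∑ x ∈ Finset.univ.filter (fun x : Fin n => x.val ≤ (i - 1).val), f x) = f i := by
  by_cases hi : i = 0
  · subst hi
    have h1 : (Finset.univ.filter (fun x : Fin n => x.val ≤ (0 : Fin n).val)) = {0} := by
      ext x
      simp only [Finset.mem_filter, Finset.mem_univ, true_and, Finset.mem_singleton,
        Fin.ext_iff, Fin.val_zero, Nat.le_zero]
    have h2 : (Finset.univ.filter (fun x : Fin n => x.val ≤ ((0 : Fin n) - 1).val))
        = Finset.univ := by
      ext x
      simp only [Finset.mem_filter, Finset.mem_univ, true_and, iff_true]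
      have hx := x.isLt
      have : ((0 : Fin n) - 1).val = n - 1 := by
        rw [sub_one_val]; simp
      omega
    rw [h1, h2, hf, Finset.sum_singleton]
    ring
  · have hv : (i - 1).val = i.val - 1 := by
      rw [sub_one_val, if_neg hi]
    have hiv : i.val ≠ 0 := by
      intro h; exact hi (Fin.ext (by rw [h, Fin.val_zero]))
    have h3 : (Finset.univ.filter (fun x : Fin n => x.val ≤ i.val))
        = insert i (Finset.univ.filter (fun x : Fin n => x.val ≤ (i - 1).val)) := by
      ext x
      simp only [Finset.mem_filter, Finset.mem_univ, true_and, Finset.mem_insert, hv,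
        Fin.ext_iff]
      omega
    have h4 : i ∉ Finset.univ.filter (fun x : Fin n => x.val ≤ (i - 1).val) := by
      simp only [Finset.mem_filter, Finset.mem_univ, true_and, hv]
      omega
    rw [h3, Finset.sum_insert h4]
    ring

def PS {n : ℕ} (M : Fin n × Fin n → ℤ) (i j : Fin n) : ℤ :=
  ∑ s ∈ Finset.univ.filter (fun s : Fin n × Fin n => s.1.val ≤ i.val ∧ s.2.val ≤ j.val), M s

lemma PS_eq {n : ℕ} (M : Fin n × Fin n → ℤ) (i j : Fin n) :
    PS M i j = ∑ i' ∈ Finset.univ.filter (fun x : Fin n => x.val ≤ i.val),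
      ∑ j' ∈ Finset.univ.filter (fun x : Fin n => x.val ≤ j.val), M (i', j') := by
  unfold PS
  rw [show (Finset.univ : Finset (Fin n × Fin n)) = Finset.univ ×ˢ Finset.univ from
    (Finset.univ_product_univ).symm]
  rw [Finset.filter_product (p := fun x : Fin n => x.val ≤ i.val)
    (q := fun x : Fin n => x.val ≤ j.val), Finset.sum_product]

lemma PS_grid {n : ℕ} [NeZero n] (M : Fin n × Fin n → ℤ)
    (hrow : ∀ i, ∑ j, M (i, j) = 0) (hcol : ∀ j, ∑ i, M (i, j) = 0) (i j : Fin n) :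
    PS M i j - PS M (i - 1) j - PS M i (j - 1) + PS M (i - 1) (j - 1) = M (i, j) := by
  have h1 : ∀ i' : Fin n,
      (∑ j' ∈ Finset.univ.filter (fun x : Fin n => x.val ≤ j.val), M (i', j'))
        - (∑ j' ∈ Finset.univ.filter (fun x : Fin n => x.val ≤ (j - 1).val), M (i', j'))
      = M (i', j) := fun i' => stepA (fun j' => M (i', j')) (hrow i') j
  have h2 : ∀ a : Fin n, PS M a j - PS M a (j - 1)
      = ∑ i' ∈ Finset.univ.filter (fun x : Fin n => x.val ≤ a.val), M (i', j) := by
    intro a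
    rw [PS_eq, PS_eq, ← Finset.sum_sub_distrib]
    exact Finset.sum_congr rfl fun i' _ => h1 i'
  have h3 := stepA (fun i' => M (i', j)) (hcol j) i
  rw [show PS M i j - PS M (i-1) j - PS M i (j-1) + PS M (i-1) (j-1)
    = (PS M i j - PS M i (j-1)) - (PS M (i-1) j - PS M (i-1) (j-1)) from by ring,
    h2 i, h2 (i-1)]
  exact h3

def chi {n : ℕ} (σ τ : Equiv.Perm (Fin n)) (s : Fin n × Fin n) : ℤ :=
  (if σ s.1 = s.2 then 1 else 0) - (if τ s.1 = s.2 then 1 else 0)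

lemma chi_row {n : ℕ} (σ τ : Equiv.Perm (Fin n)) (i : Fin n) :
    ∑ j, chi σ τ (i, j) = 0 := by
  simp [chi, Finset.sum_sub_distrib, Finset.sum_ite_eq]

lemma chi_col {n : ℕ} (σ τ : Equiv.Perm (Fin n)) (j : Fin n) :
    ∑ i, chi σ τ (i, j) = 0 := by
  have h : ∀ (ρ : Equiv.Perm (Fin n)), ∑ i : Fin n, (if ρ i = j then (1:ℤ) else 0) = 1 := by
    intro ρ
    rw [Finset.sum_eq_single (ρ.symm j)]
    · simp
    · intro b _ hb
      rw [if_neg]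
      intro hc
      exact hb (by rw [← hc]; simp)
    · simp
  simp [chi, Finset.sum_sub_distrib, h]

lemma exists_dom {n : ℕ} [NeZero n] (ρ : Equiv.Perm (Fin n)) (i₀ : Fin n)
    (σ τ : Equiv.Perm (Fin n)) :
    ∃ p : Fin n × Fin n → ℤ, IsGridDomain p σ τ ∧ p (i₀, ρ i₀) = 0 ∧ Ocnt ρ p = 0 := by
  classical
  set M := chi σ τ with hM
  set D₀ : Fin n × Fin n → ℤ := fun s => PS M s.1 s.2 with hD₀
  set c₁ := D₀ (i₀, ρ i₀) with hc₁
  set c₂ := Ocnt ρ D₀ with hc₂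
  set a : Fin n → ℤ := fun i => if i = i₀ then -c₁ else if i = i₀ + 1 then c₁ - c₂ else 0
    with ha
  refine ⟨fun s => D₀ s + a s.1, ?_, ?_, ?_⟩
  · intro i j
    have h1 := PS_grid M (chi_row σ τ) (chi_col σ τ) i j
    show D₀ (i, j) + a i - (D₀ (i-1, j) + a (i-1)) - (D₀ (i, j-1) + a i)
        + (D₀ (i-1, j-1) + a (i-1)) = _
    have h2 : D₀ (i, j) - D₀ (i-1, j) - D₀ (i, j-1) + D₀ (i-1, j-1) = M (i, j) := h1
    rw [show D₀ (i, j) + a i - (D₀ (i-1, j) + a (i-1)) - (D₀ (i, j-1) + a i)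
        + (D₀ (i-1, j-1) + a (i-1))
      = D₀ (i, j) - D₀ (i-1, j) - D₀ (i, j-1) + D₀ (i-1, j-1) from by ring, h2]
    rfl
  · show D₀ (i₀, ρ i₀) + a i₀ = 0
    simp [ha, ← hc₁]
  · show ∑ i : Fin n, (D₀ (i, ρ i) + a i) = 0
    rw [Finset.sum_add_distrib]
    have hsa : ∑ i, a i = -c₂ := by
      by_cases h2 : (i₀ + 1 : Fin n) = i₀
      · have hn1 : n = 1 := by
          have : (1 : Fin n) = 0 := by
            have := add_left_cancel (a := i₀) (b := (1 : Fin n)) (c := 0) (by simpa using h2)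
            simpa using this
          rcases n with _ | _ | m
          · exact absurd rfl (NeZero.ne 0)
          · rfl
          · exact absurd (congrArg Fin.val this) (by simp)
        subst hn1
        have hi0 : ∀ x : Fin 1, x = i₀ := fun x => Subsingleton.elim x i₀
        have h3 : ∑ i : Fin 1, a i = a i₀ := by
          rw [Fin.sum_univ_one, hi0 0]
        have h4 : c₂ = c₁ := by
          rw [hc₂]
          unfold Ocnt
          rw [Fin.sum_univ_one, hc₁]
          congr 1
          rw [hi0 0]
        rw [h3, h4]
        simp [ha]
      · have h5 : ∀ i : Fin n, a i
            = (if i = i₀ then -c₁ else 0) + (if i = i₀ + 1 then c₁ - c₂ else 0) := by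
          intro i
          have h6 : i₀ ≠ i₀ + 1 := fun h => h2 h.symm
          by_cases e1 : i = i₀
          · simp [ha, e1, h6]
          · by_cases e2 : i = i₀ + 1
            · simp [ha, e1, e2, h2]
            · simp [ha, e1, e2]
        rw [Finset.sum_congr rfl (fun i _ => h5 i), Finset.sum_add_distrib]
        simp
        ring
    rw [hsa]
    have hO : ∑ x : Fin n, D₀ (x, ρ x) = c₂ := rfl
    rw [hO]
    ring

theorem stmt7 {n : ℕ} [NeZero n] (ρ : Equiv.Perm (Fin n)) (i₀ : Fin n)
    (σ₀ : Equiv.Perm (Fin n)) :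
    ∃ FQ : Equiv.Perm (Fin n) → ℤ,
      FQ σ₀ = 0 ∧
      -- F^Q(x) = Q(p_x) for any admissible domain p_x from x to the basepoint x₀
      (∀ (σ : Equiv.Perm (Fin n)) (p : Fin n × Fin n → ℤ),
        IsGridDomain p σ σ₀ → p (i₀, ρ i₀) = 0 → Ocnt ρ p = 0 → FQ σ = Qcnt ρ i₀ p) ∧
      -- and F^Q(x) − F^Q(y) = Q(p) for any admissible domain from x to y
      (∀ (σ τ : Equiv.Perm (Fin n)) (p : Fin n × Fin n → ℤ),
        IsGridDomain p σ τ → p (i₀, ρ i₀) = 0 → Ocnt ρ p = 0 →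
          FQ σ - FQ τ = Qcnt ρ i₀ p) := by
  classical
  choose P hP using fun σ => exists_dom ρ i₀ σ σ₀
  set FQ : Equiv.Perm (Fin n) → ℤ := fun σ => Qcnt ρ i₀ (P σ) with hFQ
  have main : ∀ (σ τ : Equiv.Perm (Fin n)) (p : Fin n × Fin n → ℤ),
      IsGridDomain p σ τ → p (i₀, ρ i₀) = 0 → Ocnt ρ p = 0 →
        FQ σ - FQ τ = Qcnt ρ i₀ p := by
    intro σ τ p hp hp0 hpO
    obtain ⟨hg, h0, hOc⟩ := hP σ
    obtain ⟨hg', h0', hOc'⟩ := hP τ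
    set d : Fin n × Fin n → ℤ := fun s => P σ s - p s - P τ s with hd
    have hdlap : ∀ i j : Fin n,
        d (i, j) - d (i - 1, j) - d (i, j - 1) + d (i - 1, j - 1) = 0 := by
      intro i j
      have a1 := hg i j
      have a2 := hp i j
      have a3 := hg' i j
      simp only [hd]
      linarith
    have hd0 : d (i₀, ρ i₀) = 0 := by
      simp only [hd]
      rw [h0, h0', hp0]
      ring
    have hdO : Ocnt ρ d = 0 := by
      unfold Ocnt at hOc hOc' hpO ⊢
      simp only [hd]
      rw [Finset.sum_sub_distrib, Finset.sum_sub_distrib]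
      rw [hOc, hOc', hpO]
      ring
    have hz := qzero ρ i₀ d hdlap hd0 hdO
    have hsplit : Qcnt ρ i₀ d
        = Qcnt ρ i₀ (P σ) - Qcnt ρ i₀ p - Qcnt ρ i₀ (P τ) := by
      unfold Qcnt
      simp only [hd]
      rw [Finset.sum_sub_distrib, Finset.sum_sub_distrib]
    rw [hsplit] at hz
    simp only [hFQ]
    linarith
  have hz0 : FQ σ₀ = 0 := by
    obtain ⟨hg, h0, hOc⟩ := hP σ₀
    refine qzero ρ i₀ (P σ₀) ?_ h0 hOc
    intro i j
    have := hg i j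
    linarith
  exact ⟨FQ, hz0, fun σ p h1 h2 h3 => by
    have := main σ σ₀ p h1 h2 h3
    rw [hz0] at this
    linarith, main⟩
end
end
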